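/- arXiv:2403.08064 — 7 statements merged into one kernel-verified Lean document; each statement's English description precedes it below -/
import Mathlib

section
/- Let V be a finite-dimensional real vector space and B a symmetric bilinear form on V satisfying the Hodge index condition. If u, v, w ∈ V and B(u,u) > 0, then the determinant of the 3×3 Gram matrix with entries (B(u,u), B(u,v), B(u,w); B(v,u), B(v,v), B(v,w); B(w,u), B(w,v), B(w,w)) is nonnegative. -/
def HodgeIndexCond {V : Type*} [AddCommGroup V] [Module ℝ V]
    (B : LinearMap.BilinForm ℝ V) : Prop :=
  ∀ W : Submodule ℝ V, (∀ w ∈ W, w ≠ 0 → 0 < B w w) → Module.finrank ℝ W ≤ 1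

set_option maxHeartbeats 1000000 in
theorem stmt_0 {V : Type*} [AddCommGroup V] [Module ℝ V] [FiniteDimensional ℝ V]
    (B : LinearMap.BilinForm ℝ V) (hsym : B.IsSymm) (hhodge : HodgeIndexCond B)
    (u v w : V) (hu : 0 < B u u) :
    0 ≤ (Matrix.det !![B u u, B u v, B u w;
                       B v u, B v v, B v w;
                       B w u, B w v, B w w]) := by
  have hsymm : ∀ x y : V, B x y = B y x := fun x y => (hsym.eq y x).symm ▸ rfl
  -- Step 1: anything orthogonal to u has nonpositive self-pairing
  have key : ∀ x : V, B u x = 0 → B x x ≤ 0 := by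
    intro x hx
    by_contra h
    push_neg at h
    have hxu : B x u = 0 := (hsymm x u).trans hx
    have hx0 : x ≠ 0 := by
      rintro rfl; simp at h
    have hli : LinearIndependent ℝ ![u, x] := by
      rw [LinearIndependent.pair_iff]
      intro s t hst
      have h1 : B u (s • u + t • x) = 0 := by rw [hst]; simp
      simp [map_add, map_smul, hx, smul_eq_mul] at h1
      have hs : s = 0 := by
        rcases h1 with h1 | h1
        · exact h1
        · exact absurd h1 hu.ne'
      subst hs
      refine ⟨rfl, ?_⟩
      simp only [zero_smul, zero_add] at hst
      rcases smul_eq_zero.mp hst with ht | ht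
      · exact ht
      · exact absurd ht hx0
    set W : Submodule ℝ V := Submodule.span ℝ {u, x} with hW
    have hpos : ∀ z ∈ W, z ≠ 0 → 0 < B z z := by
      intro z hz hz0
      rw [hW, Submodule.mem_span_pair] at hz
      obtain ⟨s, t, rfl⟩ := hz
      have hval : B (s • u + t • x) (s • u + t • x)
          = s ^ 2 * B u u + t ^ 2 * B x x := by
        simp [map_add, map_smul, hx, hxu, smul_eq_mul]
        ring
      rw [hval]
      rcases eq_or_ne s 0 with rfl | hs
      · rcases eq_or_ne t 0 with rfl | ht
        · simp at hz0
        · have : 0 < t ^ 2 := by positivity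
          nlinarith
      · have : 0 < s ^ 2 := by positivity
        nlinarith
    have hle := hhodge W hpos
    have hrange : Set.range ![u, x] = {u, x} := by
      ext y
      simp [Fin.exists_fin_two]
      tauto
    have h2 : Module.finrank ℝ W = 2 := by
      rw [hW, ← hrange, finrank_span_eq_card hli]
      simp
    omega
  -- Step 2: Cauchy–Schwarz on the orthogonal complement of u
  have CS : ∀ x y : V, B u x = 0 → B u y = 0 → (B x y) ^ 2 ≤ B x x * B y y := by
    intro x y hx hy
    have hq : ∀ t : ℝ, B x x + 2 * t * B x y + t ^ 2 * B y y ≤ 0 := by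
      intro t
      have h0 : B u (x + t • y) = 0 := by simp [map_add, map_smul, hx, hy]
      have := key (x + t • y) h0
      have hexp : B (x + t • y) (x + t • y)
          = B x x + 2 * t * B x y + t ^ 2 * B y y := by
        simp [map_add, map_smul, smul_eq_mul, hsymm y x]
        ring
      linarith [hexp ▸ this]
    have hxx := key x hx
    have hyy := key y hy
    rcases eq_or_lt_of_le hyy with hy0 | hy0
    · -- B y y = 0 : show B x y = 0
      have hy0' : B y y = 0 := hy0
      have hxy : B x y = 0 := by
        by_contra hne
        have ht := hq ((1 - B x x) / (2 * B x y))
        rw [hy0'] at ht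
        have hc : 2 * ((1 - B x x) / (2 * B x y)) * B x y = 1 - B x x := by
          field_simp
        nlinarith [ht, hc]
      simp [hxy, hy0']
    · -- B y y < 0
      have ht := hq (-(B x y) / B y y)
      have hne : B y y ≠ 0 := hy0.ne
      have hc : (-(B x y) / B y y) * B y y = -(B x y) := div_mul_cancel₀ _ hne
      nlinarith [sq_nonneg (B x y), ht, hc, hy0]
  -- Step 3: orthogonalize v, w against u and conclude
  have ha : B u u ≠ 0 := hu.ne'
  set a := B u u with hadef
  set b := B u v with hbdef
  set c := B u w with hcdef
  have hv' : B u (v - (b / a) • u) = 0 := by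
    simp [map_sub, map_smul, smul_eq_mul, ← hbdef, ← hadef]
    field_simp
    ring
  have hw' : B u (w - (c / a) • u) = 0 := by
    simp [map_sub, map_smul, smul_eq_mul, ← hcdef, ← hadef]
    field_simp
    ring
  have hCS := CS _ _ hv' hw'
  have e1 : B (v - (b / a) • u) (v - (b / a) • u) = B v v - b ^ 2 / a := by
    simp [map_sub, map_smul, smul_eq_mul, hsymm v u, ← hbdef, ← hadef]
    field_simp
    ring
  have e2 : B (w - (c / a) • u) (w - (c / a) • u) = B w w - c ^ 2 / a := by
    simp [map_sub, map_smul, smul_eq_mul, hsymm w u, ← hcdef, ← hadef]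
    field_simp
    ring
  have e3 : B (v - (b / a) • u) (w - (c / a) • u) = B v w - b * c / a := by
    simp [map_sub, map_smul, smul_eq_mul, hsymm v u, hsymm w u, ← hbdef, ← hcdef, ← hadef]
    field_simp
    ring
  rw [e1, e2, e3] at hCS
  rw [Matrix.det_fin_three]
  simp only [Matrix.cons_val', Matrix.cons_val_zero, Matrix.cons_val_one, Matrix.head_cons,
    Matrix.empty_val', Matrix.cons_val_fin_one, Matrix.head_fin_const, Matrix.cons_val_two,
    Matrix.tail_cons, Matrix.head_fin_const, Matrix.of_apply]
  have hvu : B v u = b := hsymm v u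
  have hwu : B w u = c := hsymm w u
  have hwv : B w v = B v w := hsymm w v
  rw [hvu, hwu, hwv]
  have ha2 : (0:ℝ) < a ^ 2 := by positivity
  have hk : (a * B v w - b * c) ^ 2 ≤ (a * B v v - b ^ 2) * (a * B w w - c ^ 2) := by
    have h := mul_le_mul_of_nonneg_left hCS ha2.le
    have l1 : a ^ 2 * ((B v w - b * c / a) ^ 2) = (a * B v w - b * c) ^ 2 := by
      field_simp
    have l2 : a ^ 2 * ((B v v - b ^ 2 / a) * (B w w - c ^ 2 / a))
        = (a * B v v - b ^ 2) * (a * B w w - c ^ 2) := by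
      field_simp
    linarith [l1 ▸ l2 ▸ h]
  nlinarith [hk, hu, mul_pos hu hu]
end

section
/- Let V be a finite-dimensional real vector space and B a symmetric bilinear form on V satisfying the Hodge index condition. Let N be a linear subspace of V containing a vector x with B(x,x) > 0, let H ∈ V, and let w ∈ N satisfy B(w,n) = 0 for every n ∈ N. Then B(w,H) = 0. -/
theorem stmt_2 {V : Type*} [AddCommGroup V] [Module ℝ V] [FiniteDimensional ℝ V]
    (B : LinearMap.BilinForm ℝ V) (hsym : B.IsSymm) (hhodge : HodgeIndexCond B)
    (N : Submodule ℝ V) (x : V) (hxN : x ∈ N) (hx : 0 < B x x)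
    (H : V) (w : V) (hwN : w ∈ N) (hw : ∀ n ∈ N, B w n = 0) :
    B w H = 0 := by
  by_contra hc
  set c : ℝ := B w H with hcdef
  set a : ℝ := B x x with hadef
  set d : ℝ := B x H with hddef
  have ha : a ≠ 0 := ne_of_gt hx
  have hww : B w w = 0 := hw w hwN
  have hwx : B w x = 0 := hw x hxN
  have hxw : B x w = 0 := by have := hsym.eq x w; rw [this, hwx]
  have hHw : B H w = c := by have := hsym.eq H w; rw [this]
  set l : ℝ := (d ^ 2 / a - B H H + 1) / (2 * c) with hldef
  set y : V := l • w + H with hydef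
  set y' : V := y - (d / a) • x with hy'def
  have hwy : B w y = c := by
    simp [hydef, map_add, map_smul, smul_eq_mul, hww, hcdef]
  have hwy' : B w y' = c := by
    simp [hy'def, map_sub, map_smul, smul_eq_mul, hwy, hwx]
  have hxy : B x y = d := by
    simp [hydef, map_add, map_smul, smul_eq_mul, hxw, hddef]
  have hxy' : B x y' = 0 := by
    simp only [hy'def, map_sub, map_smul, smul_eq_mul, hxy, ← hadef]
    field_simp
    ring
  have hy'x : B y' x = 0 := by
    have := hsym.eq y' x; rw [this, hxy']
  have hyy : B y y = 2 * l * c + B H H := by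
    simp only [hydef, map_add, LinearMap.add_apply, map_smul, LinearMap.smul_apply,
      smul_eq_mul, hww, hHw]
    rw [← hcdef]
    ring
  have hyx : B y x = d := by
    have := hsym.eq y x; rw [this, hxy]
  have hy'y' : B y' y' = 1 := by
    have expand : B y' y' = B y y - (d / a) * B y x - (d / a) * (B x y - (d / a) * a) := by
      simp only [hy'def, map_sub, LinearMap.sub_apply, map_smul, LinearMap.smul_apply,
        smul_eq_mul, ← hadef]
      ring
    rw [expand, hyy, hyx, hxy, hldef]
    field_simp
    ring
  -- x and y' are linearly independent
  have hli : LinearIndependent ℝ ![x, y'] := by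
    rw [LinearIndependent.pair_iff]
    intro s t hst
    have h1 : t * c = 0 := by
      have := congrArg (fun v => B w v) hst
      simpa [map_add, map_smul, smul_eq_mul, hwx, hwy'] using this
    have ht : t = 0 := by
      rcases mul_eq_zero.mp h1 with h | h
      · exact h
      · exact absurd h hc
    have h2 : s * a = 0 := by
      have := congrArg (fun v => B x v) hst
      simpa [map_add, map_smul, smul_eq_mul, hxy', ht] using this
    have hs : s = 0 := by
      rcases mul_eq_zero.mp h2 with h | h
      · exact h
      · exact absurd h ha
    exact ⟨hs, ht⟩
  -- the span of {x, y'} is positive definite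
  set W : Submodule ℝ V := Submodule.span ℝ {x, y'} with hWdef
  have hpos : ∀ v ∈ W, v ≠ 0 → 0 < B v v := by
    intro v hv hv0
    rcases Submodule.mem_span_pair.mp hv with ⟨s, t, hst⟩
    have hBvv : B v v = s ^ 2 * a + t ^ 2 * 1 := by
      rw [← hst]
      simp only [map_add, LinearMap.add_apply, map_smul, LinearMap.smul_apply,
        smul_eq_mul, hxy', hy'x, hy'y', ← hadef]
      ring
    rw [hBvv]
    rcases eq_or_ne s 0 with hs | hs
    · have ht : t ≠ 0 := by
        intro ht; exact hv0 (by rw [← hst, hs, ht]; simp)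
      have : 0 < t ^ 2 := by positivity
      nlinarith [sq_nonneg s]
    · nlinarith [sq_nonneg t, pow_pos (abs_pos.mpr hs) 2, sq_abs s]
  have hle : Module.finrank ℝ W ≤ 1 := hhodge W hpos
  have hrange : Set.range ![x, y'] = {x, y'} := by
    simp only [Matrix.range_cons, Matrix.range_empty, Set.union_empty, Set.union_singleton]
    exact Set.pair_comm y' x
  have h2 : Module.finrank ℝ W = 2 := by
    rw [hWdef, ← hrange, finrank_span_eq_card hli]
    simp
  omega
end

section
/- Let V be a finite-dimensional real vector space and B a symmetric bilinear form on V satisfying the Hodge index condition. Let L be a linear subspace of V containing a vector x with B(x,x) > 0. Suppose H ∈ V can be written as H = H₁ + H₂ where H₁ ∈ L and B(H₂, y) = 0 for all y ∈ L. Then B(H,H) ≤ B(H₁,H₁). -/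
theorem stmt_3 {V : Type*} [AddCommGroup V] [Module ℝ V] [FiniteDimensional ℝ V]
    (B : LinearMap.BilinForm ℝ V) (hsym : B.IsSymm) (hhodge : HodgeIndexCond B)
    (L : Submodule ℝ V) (x : V) (hxL : x ∈ L) (hx : 0 < B x x)
    (H H₁ H₂ : V) (hsum : H = H₁ + H₂) (hH₁ : H₁ ∈ L)
    (hH₂ : ∀ y ∈ L, B H₂ y = 0) :
    B H H ≤ B H₁ H₁ := by
  have hBx2 : B H₂ x = 0 := hH₂ x hxL
  have hBx2' : B x H₂ = 0 := by rw [← hsym.eq]; simpa using hBx2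
  have hB21 : B H₂ H₁ = 0 := hH₂ H₁ hH₁
  have hB12 : B H₁ H₂ = 0 := by rw [← hsym.eq]; simpa using hB21
  have key : B H₂ H₂ ≤ 0 := by
    by_contra h
    push_neg at h
    -- span of x and H₂ is positive definite with dim 2
    have hindep : LinearIndependent ℝ ![x, H₂] := by
      rw [LinearIndependent.pair_iff]
      intro a b hab
      have h1 : B x (a • x + b • H₂) = a * B x x := by
        simp [hBx2', mul_comm]
      have h2 : B H₂ (a • x + b • H₂) = b * B H₂ H₂ := by
        simp [hBx2, mul_comm]
      rw [hab] at h1 h2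
      simp at h1 h2
      constructor
      · rcases h1 with h1 | h1
        · exact h1
        · exact absurd h1 hx.ne'
      · rcases h2 with h2 | h2
        · exact h2
        · exact absurd h2 h.ne'
    set W : Submodule ℝ V := Submodule.span ℝ {x, H₂}
    have hpos : ∀ w ∈ W, w ≠ 0 → 0 < B w w := by
      intro w hw hw0
      rw [Submodule.mem_span_pair] at hw
      obtain ⟨a, b, rfl⟩ := hw
      have hexp : B (a • x + b • H₂) (a • x + b • H₂)
          = a * a * B x x + b * b * B H₂ H₂ := by
        simp [hBx2, hBx2']; ring
      rw [hexp]
      have hab : a ≠ 0 ∨ b ≠ 0 := by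
        by_contra hc
        push_neg at hc
        exact hw0 (by simp [hc.1, hc.2])
      rcases hab with ha | hb
      · nlinarith [mul_self_nonneg b, mul_pos (mul_self_pos.mpr ha) hx]
      · nlinarith [mul_self_nonneg a, mul_pos (mul_self_pos.mpr hb) h]
    have hrank : Module.finrank ℝ W = 2 := by
      have hW : W = Submodule.span ℝ (Set.range ![x, H₂]) := by
        rw [show Set.range ![x, H₂] = {x, H₂} by
          simp [Matrix.range_cons, Matrix.range_empty]
          exact Set.pair_comm _ _]
      rw [hW, finrank_span_eq_card hindep]
      simp
    have := hhodge W hpos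
    omega
  have hexp : B H H = B H₁ H₁ + 2 * B H₁ H₂ + B H₂ H₂ := by
    rw [hsum]; simp [map_add, LinearMap.add_apply]
    rw [hB12, hB21]; ring
  rw [hexp, hB12]
  linarith
end

section
/- Let V be a finite-dimensional real vector space and B a symmetric bilinear form on V satisfying the Hodge index condition. Let d ≥ 1 be a real number and let H, C₀, C ∈ V satisfy: B(H,H) > 4d²; B(C₀,C₀) = 0; B(C,C) = 0 or B(C,C) = −2; 0 ≤ B(C₀,H) ≤ d; 0 ≤ B(C,H) ≤ d; and B(C₀,C) = n for some natural number n. Then B(C₀,C) = 0. -/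
/-- If `a + 2tb + t²c ≤ 0` for all `t`, then `b² ≤ a*c`. -/
lemma disc_lemma (a b c : ℝ) (h : ∀ t : ℝ, a + 2 * t * b + t ^ 2 * c ≤ 0) :
    b ^ 2 ≤ a * c := by
  have ha : a ≤ 0 := by have := h 0; linarith [this]
  rcases lt_trichotomy c 0 with hc | hc | hc
  · have hc' : c ≠ 0 := ne_of_lt hc
    have h2 : a - b ^ 2 / c ≤ 0 := by
      have heq : a + 2 * (-b / c) * b + (-b / c) ^ 2 * c = a - b ^ 2 / c := by
        field_simp; ring
      linarith [heq ▸ h (-b / c)]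
    have h3 : 0 ≤ (a - b ^ 2 / c) * c := by
      nlinarith [mul_nonneg (neg_nonneg.2 h2) (neg_nonneg.2 hc.le)]
    have h4 : (a - b ^ 2 / c) * c = a * c - b ^ 2 := by field_simp
    linarith
  · subst hc
    have hb : b = 0 := by
      by_contra hb
      have heq : a + 2 * ((1 - a) / (2 * b)) * b + ((1 - a) / (2 * b)) ^ 2 * 0 = 1 := by
        field_simp; ring
      linarith [heq ▸ h ((1 - a) / (2 * b))]
    simp [hb]
  · exfalso
    set t := Real.sqrt ((1 - a) / c) with ht
    have ht2 : t ^ 2 = (1 - a) / c := Real.sq_sqrt (div_nonneg (by linarith) hc.le)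
    have htc : t ^ 2 * c = 1 - a := by rw [ht2]; field_simp
    nlinarith [h t, h (-t)]

set_option maxHeartbeats 1000000 in
theorem stmt_4 {V : Type*} [AddCommGroup V] [Module ℝ V] [FiniteDimensional ℝ V]
    (B : LinearMap.BilinForm ℝ V) (hsym : B.IsSymm) (hhodge : HodgeIndexCond B)
    (d : ℝ) (hd : 1 ≤ d) (H C₀ C : V)
    (hH : 4 * d ^ 2 < B H H)
    (hC₀ : B C₀ C₀ = 0)
    (hC : B C C = 0 ∨ B C C = -2)
    (hC₀H : 0 ≤ B C₀ H) (hC₀H' : B C₀ H ≤ d)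
    (hCH : 0 ≤ B C H) (hCH' : B C H ≤ d)
    (n : ℕ) (hn : B C₀ C = n) :
    B C₀ C = 0 := by
  by_contra hne
  have hn1 : 1 ≤ (n : ℝ) := by
    have hn0 : n ≠ 0 := by rintro rfl; exact hne (by simpa using hn)
    exact_mod_cast Nat.one_le_iff_ne_zero.mpr hn0
  set h := B H H with hh
  have hd0 : 0 < d := lt_of_lt_of_le one_pos hd
  have hhpos : 0 < h := by nlinarith
  have hh0 : h ≠ 0 := ne_of_gt hhpos
  -- B is negative semidefinite on the orthogonal complement of H
  have hperp : ∀ x : V, B x H = 0 → B x x ≤ 0 := by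
    intro x hx
    by_contra hpos
    push_neg at hpos
    have hxne : x ≠ 0 := by
      rintro rfl; simp at hpos
    have hHx : B H x = 0 := by
      have := hsym.eq x H; rw [← this, hx]
    have hli : LinearIndependent ℝ ![H, x] := by
      rw [LinearIndependent.pair_iff]
      intro s t hst
      have h1 : B (s • H + t • x) H = 0 := by rw [hst]; simp
      simp [map_add, map_smul, smul_eq_mul, hx] at h1
      have hs : s = 0 := by
        rcases h1 with h1 | h1
        · exact h1
        · exact absurd h1 hh0
      subst hs
      simp at hst
      rcases hst with ht | ht
      · exact ⟨rfl, ht⟩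
      · exact absurd ht hxne
    set W := Submodule.span ℝ {H, x} with hW
    have hposdef : ∀ w ∈ W, w ≠ 0 → 0 < B w w := by
      intro w hw hwne
      rw [hW, Submodule.mem_span_pair] at hw
      obtain ⟨a, b, hab⟩ := hw
      have hab0 : ¬(a = 0 ∧ b = 0) := by
        rintro ⟨rfl, rfl⟩; simp at hab; exact hwne hab.symm
      have : B w w = a ^ 2 * h + b ^ 2 * B x x := by
        rw [← hab]
        simp [map_add, map_smul, smul_eq_mul, hx, hHx]
        ring
      rw [this]
      rcases (not_and_or.mp hab0) with ha | hb
      · have : a ^ 2 > 0 := by positivity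
        nlinarith [sq_nonneg b]
      · have : b ^ 2 > 0 := by positivity
        nlinarith [sq_nonneg a]
    have hle := hhodge W hposdef
    have hrank : Module.finrank ℝ W = 2 := by
      have h2 := finrank_span_eq_card (R := ℝ) hli
      have hr : Set.range ![H, x] = {H, x} := by
        simp [Matrix.range_cons, Matrix.range_empty]
        exact Set.pair_comm x H
      rw [hW, ← hr, h2]
      simp
    omega
  -- project C₀ and C to H-perp
  set a := B C₀ H with ha
  set b := B C H with hb
  set e := B C C with he
  have hHC₀ : B H C₀ = a := by
    have t := hsym.eq C₀ H; rw [ha]; exact t.symm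
  have hHC : B H C = b := by
    have t := hsym.eq C H; rw [hb]; exact t.symm
  have hCC₀ : B C C₀ = (n : ℝ) := by
    have t := hsym.eq C₀ C; rw [← t]; exact hn
  have expand : ∀ (u v : V) (s t : ℝ),
      B (u - s • H) (v - t • H)
        = B u v - t * B u H - s * B H v + s * t * h := by
    intro u v s t
    simp only [map_sub, map_smul, LinearMap.sub_apply, LinearMap.smul_apply,
      smul_eq_mul, ← hh]
    ring
  set x := C₀ - (a / h) • H with hx
  set y := C - (b / h) • H with hy
  have hxH : B x H = 0 := by
    rw [hx]
    simp only [map_sub, map_smul, LinearMap.sub_apply, LinearMap.smul_apply,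
      smul_eq_mul, ← ha, ← hh]
    field_simp
    ring
  have hyH : B y H = 0 := by
    rw [hy]
    simp only [map_sub, map_smul, LinearMap.sub_apply, LinearMap.smul_apply,
      smul_eq_mul, ← hb, ← hh]
    field_simp
    ring
  have hxx : B x x = -(a ^ 2 / h) := by
    rw [hx, expand, hC₀, ← ha, hHC₀]
    field_simp
    ring
  have hyy : B y y = e - b ^ 2 / h := by
    rw [hy, expand, ← he, ← hb, hHC]
    field_simp
    ring
  have hxy : B x y = (n : ℝ) - a * b / h := by
    rw [hx, hy, expand, hn, ← ha, hHC]
    field_simp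
    ring
  have hyx : B y x = B x y := by
    have t := hsym.eq x y; exact t.symm
  have key : (B x y) ^ 2 ≤ B x x * B y y := by
    apply disc_lemma
    intro t
    have hmem : B (x + t • y) H = 0 := by
      simp only [map_add, map_smul, LinearMap.add_apply, LinearMap.smul_apply,
        smul_eq_mul, hxH, hyH]
      ring
    have hle := hperp (x + t • y) hmem
    calc B x x + 2 * t * B x y + t ^ 2 * B y y
        = B (x + t • y) (x + t • y) := by
          simp only [map_add, map_smul, LinearMap.add_apply, LinearMap.smul_apply,
            smul_eq_mul, hyx]
          ring
      _ ≤ 0 := hle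
  rw [hxx, hyy, hxy] at key
  have he2 : -2 ≤ e ∧ e ≤ 0 := by rcases hC with h1 | h1 <;> rw [h1] <;> norm_num
  -- clear denominators: (n*h - a*b)^2 ≤ a^2*(b^2 - e*h)
  have key2 : ((n : ℝ) * h - a * b) ^ 2 ≤ a ^ 2 * (b ^ 2 - e * h) := by
    have h2 : (0 : ℝ) < h ^ 2 := by positivity
    have h3 := mul_le_mul_of_nonneg_right key (le_of_lt h2)
    calc ((n : ℝ) * h - a * b) ^ 2 = ((n : ℝ) - a * b / h) ^ 2 * h ^ 2 := by
          field_simp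
      _ ≤ -(a ^ 2 / h) * (e - b ^ 2 / h) * h ^ 2 := h3
      _ = a ^ 2 * (b ^ 2 - e * h) := by field_simp; ring
  have s1 : (n : ℝ) ^ 2 * h ≤ 2 * n * (a * b) + 2 * a ^ 2 := by
    nlinarith [key2, mul_nonneg (by linarith [he2.1] : (0:ℝ) ≤ e + 2)
      (mul_nonneg (sq_nonneg a) hhpos.le), hhpos]
  have hab : a * b ≤ d ^ 2 := by nlinarith
  have ha2 : a ^ 2 ≤ d ^ 2 := by nlinarith
  have hn2 : (0:ℝ) < (n:ℝ) ^ 2 := by nlinarith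
  have hn2h : (n:ℝ) ^ 2 * (4 * d ^ 2) < (n:ℝ) ^ 2 * h := mul_lt_mul_of_pos_left hH hn2
  have t1 : 2 * (n:ℝ) * (a * b) ≤ 2 * (n:ℝ) * d ^ 2 :=
    mul_le_mul_of_nonneg_left hab (by positivity)
  have t3 : (0:ℝ) ≤ (2 * (n:ℝ) + 1) * ((n:ℝ) - 1) * d ^ 2 :=
    mul_nonneg (mul_nonneg (by linarith) (by linarith)) (sq_nonneg d)
  nlinarith [s1, t1, ha2, t3, hn2h]
end

section
/- Let V be a finite-dimensional real vector space and B a symmetric bilinear form on V satisfying the Hodge index condition. Let H, C, C′ ∈ V satisfy: B(H,H) ≥ 4; B(C,C) = B(C′,C′) = −2; B(C,H) = a for some integer a ≥ 1; B(C′,H) = 0; and B(C,C′) = n for some natural number n. Then n ≤ a + 1. -/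
theorem stmt_6 {V : Type*} [AddCommGroup V] [Module ℝ V] [FiniteDimensional ℝ V]
    (B : LinearMap.BilinForm ℝ V) (hsym : B.IsSymm) (hhodge : HodgeIndexCond B)
    (H C C' : V)
    (hH : 4 ≤ B H H)
    (hC : B C C = -2) (hC' : B C' C' = -2)
    (a : ℤ) (ha : 1 ≤ a) (hCH : B C H = a)
    (hC'H : B C' H = 0)
    (n : ℕ) (hn : B C C' = n) :
    (n : ℤ) ≤ a + 1 := by
  by_contra hcon
  push_neg at hcon
  have hcon' : a + 2 ≤ (n : ℤ) := by omega
  have hn2 : (a : ℝ) + 2 ≤ (n : ℝ) := by exact_mod_cast hcon'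
  have ha' : (1 : ℝ) ≤ (a : ℝ) := by exact_mod_cast ha
  set h : ℝ := B H H with hhdef
  have hpos : (0 : ℝ) < h := by linarith
  have hHC : B H C = a := by rw [← hsym.eq]; simpa using hCH
  have hHC' : B H C' = 0 := by rw [← hsym.eq]; simpa using hC'H
  have hC'C : B C' C = n := by rw [← hsym.eq]; simpa using hn
  set w : V := C - ((a : ℝ)/h) • H + ((n : ℝ)/2) • C' with hwdef
  have hBHw : B H w = 0 := by
    simp only [hwdef, map_add, map_sub, map_smul, LinearMap.add_apply, LinearMap.sub_apply,
      LinearMap.smul_apply, smul_eq_mul, hC, hC', hCH, hC'H, hn, hHC, hHC', hC'C, ← hhdef]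
    field_simp
    ring
  have hBwH : B w H = 0 := by
    simp only [hwdef, map_add, map_sub, map_smul, LinearMap.add_apply, LinearMap.sub_apply,
      LinearMap.smul_apply, smul_eq_mul, hC, hC', hCH, hC'H, hn, hHC, hHC', hC'C, ← hhdef]
    field_simp
    ring
  have hBwC : B w C = -2 - (a : ℝ)^2/h + (n : ℝ)^2/2 := by
    simp only [hwdef, map_add, map_sub, map_smul, LinearMap.add_apply, LinearMap.sub_apply,
      LinearMap.smul_apply, smul_eq_mul, hC, hC', hCH, hC'H, hn, hHC, hHC', hC'C, ← hhdef]
    field_simp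
  have hBwC' : B w C' = 0 := by
    simp only [hwdef, map_add, map_sub, map_smul, LinearMap.add_apply, LinearMap.sub_apply,
      LinearMap.smul_apply, smul_eq_mul, hC, hC', hCH, hC'H, hn, hHC, hHC', hC'C, ← hhdef]
    field_simp
    ring
  have hBww : B w w = (n : ℝ)^2/2 - 2 - (a : ℝ)^2/h := by
    have hstep : B w w = B w C - ((a : ℝ)/h) * B w H + ((n : ℝ)/2) * B w C' := by
      nth_rewrite 2 [hwdef]
      simp only [map_add, map_sub, map_smul, smul_eq_mul]
    rw [hstep, hBwH, hBwC, hBwC']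
    ring
  have hwwpos : 0 < B w w := by
    rw [hBww]
    have h1 : (a : ℝ)^2/h ≤ (a : ℝ)^2/4 := by
      apply div_le_div_of_nonneg_left (by positivity) (by norm_num) hH
    nlinarith [sq_nonneg ((n : ℝ) - (a : ℝ) - 2)]
  have key : ∀ s t : ℝ, B (s • H + t • w) (s • H + t • w) = s^2 * h + t^2 * B w w := by
    intro s t
    simp only [map_add, map_smul, LinearMap.add_apply, LinearMap.smul_apply, smul_eq_mul,
      hBHw, hBwH, ← hhdef]
    ring
  have zero_coeffs : ∀ s t : ℝ, s • H + t • w = 0 → s = 0 ∧ t = 0 := by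
    intro s t hst
    have h0 : s^2 * h + t^2 * B w w = 0 := by rw [← key s t, hst]; simp
    have h1 : 0 ≤ s^2 * h := mul_nonneg (sq_nonneg s) hpos.le
    have h2 : 0 ≤ t^2 * B w w := mul_nonneg (sq_nonneg t) hwwpos.le
    have hs : s^2 * h = 0 := by linarith
    have ht : t^2 * B w w = 0 := by linarith
    have hs0 : s^2 = 0 := (mul_eq_zero.mp hs).resolve_right hpos.ne'
    have ht0 : t^2 = 0 := (mul_eq_zero.mp ht).resolve_right hwwpos.ne'
    exact ⟨by simpa using pow_eq_zero_iff (n := 2) (by norm_num) |>.mp hs0,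
           by simpa using pow_eq_zero_iff (n := 2) (by norm_num) |>.mp ht0⟩
  have hli : LinearIndependent ℝ ![H, w] := by
    rw [LinearIndependent.pair_iff]
    exact zero_coeffs
  have hspan : Module.finrank ℝ (Submodule.span ℝ (Set.range ![H, w])) ≤ 1 := by
    apply hhodge
    intro v hv hv0
    rw [Submodule.mem_span_range_iff_exists_fun] at hv
    obtain ⟨c, hc⟩ := hv
    rw [Fin.sum_univ_two] at hc
    simp only [Matrix.cons_val_zero, Matrix.cons_val_one, Matrix.head_cons] at hc
    subst hc
    rw [key]
    rcases eq_or_ne (c 0) 0 with h0 | h0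
    · have ht : c 1 ≠ 0 := by
        intro h1
        apply hv0
        simp [h0, h1]
      have : 0 < (c 1)^2 := by positivity
      nlinarith [mul_nonneg (sq_nonneg (c 0)) hpos.le]
    · have : 0 < (c 0)^2 := by positivity
      nlinarith [mul_nonneg (sq_nonneg (c 1)) hwwpos.le]
  rw [finrank_span_eq_card hli] at hspan
  simp at hspan
end

section
/- Let V be a finite-dimensional real vector space and B a symmetric bilinear form on V satisfying the Hodge index condition. Let H, C, C′ ∈ V satisfy: B(H,H) > 0; B(C,C) ≥ 0; B(C′,C′) ≥ 0; B(C,H) ≥ 0; and B(C′,H) ≥ 0. Then B(C,C′)·B(H,H) ≤ 2·B(C,H)·B(C′,H). -/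
private theorem hodge_key {V : Type*} [AddCommGroup V] [Module ℝ V] [FiniteDimensional ℝ V]
    (B : LinearMap.BilinForm ℝ V) (hsym : B.IsSymm) (hhodge : HodgeIndexCond B)
    (H : V) (hH : 0 < B H H) (v : V) :
    B v v * B H H ≤ B v H * B v H := by
  by_contra hlt
  push_neg at hlt
  set t : ℝ := B v H / B H H with ht
  set v' : V := v - t • H with hv'
  have hBv'H : B v' H = 0 := by
    have : B (v - t • H) H = B v H - t * B H H := by
      simp [map_sub, map_smul, LinearMap.sub_apply, LinearMap.smul_apply, smul_eq_mul]
    rw [hv', this, ht, div_mul_cancel₀ _ (ne_of_gt hH)]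
    ring
  have hBHv' : B H v' = 0 := by
    have h := hsym.eq v' H
    rw [← h, hBv'H]
  have hpos : 0 < B v' v' := by
    have hexp : B v' v' = B v v - 2 * t * B v H + t * t * B H H := by
      have h1 : B H v = B v H := hsym.eq H v
      simp [hv', map_sub, map_smul, LinearMap.sub_apply, LinearMap.smul_apply, smul_eq_mul, h1]
      ring
    have hth : t * B H H = B v H := by
      rw [ht, div_mul_cancel₀ _ (ne_of_gt hH)]
    nlinarith [hlt, hH, hexp, hth]
  set W : Submodule ℝ V := Submodule.span ℝ {H, v'} with hW
  have hHW : H ∈ W := Submodule.subset_span (by simp)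
  have hv'W : v' ∈ W := Submodule.subset_span (by simp)
  have hposW : ∀ w ∈ W, w ≠ 0 → 0 < B w w := by
    intro w hw hwne
    obtain ⟨a, b, rfl⟩ := Submodule.mem_span_pair.mp hw
    have hexp : B (a • H + b • v') (a • H + b • v') =
        a * a * B H H + b * b * B v' v' := by
      simp [map_add, map_smul, LinearMap.add_apply, LinearMap.smul_apply, smul_eq_mul,
        hBv'H, hBHv']
      ring
    rw [hexp]
    have hab : a ≠ 0 ∨ b ≠ 0 := by
      by_contra hcon
      push_neg at hcon
      exact hwne (by simp [hcon.1, hcon.2])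
    rcases hab with ha | hb
    · nlinarith [mul_self_nonneg a, mul_self_nonneg b, mul_pos (mul_self_pos.mpr ha) hH,
        mul_nonneg (mul_self_nonneg b) hpos.le]
    · nlinarith [mul_nonneg (mul_self_nonneg a) hH.le,
        mul_pos (mul_self_pos.mpr hb) hpos]
  have hle := hhodge W hposW
  -- H and v' are linearly independent, so finrank W ≥ 2
  have hli : LinearIndependent ℝ ![H, v'] := by
    rw [LinearIndependent.pair_iff]
    intro s u hsu
    have h1 : B (s • H + u • v') H = s * B H H := by
      simp [map_add, map_smul, LinearMap.add_apply, LinearMap.smul_apply, smul_eq_mul, hBv'H]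
    rw [hsu] at h1
    simp at h1
    have hs : s = 0 := by
      rcases h1 with h | h
      · exact h
      · exact absurd h (ne_of_gt hH)
    have h2 : B (s • H + u • v') v' = u * B v' v' := by
      simp [map_add, map_smul, LinearMap.add_apply, LinearMap.smul_apply, smul_eq_mul, hBHv']
    rw [hsu] at h2
    simp at h2
    have hu : u = 0 := by
      rcases h2 with h | h
      · exact h
      · exact absurd h (ne_of_gt hpos)
    exact ⟨hs, hu⟩
  have hg : W.subtype ∘ ![(⟨H, hHW⟩ : W), ⟨v', hv'W⟩] = ![H, v'] := by
    ext i
    fin_cases i <;> rfl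
  rw [← hg] at hli
  have hliW := LinearIndependent.of_comp W.subtype hli
  have hcard := hliW.fintype_card_le_finrank
  simp at hcard
  omega

theorem stmt_7 {V : Type*} [AddCommGroup V] [Module ℝ V] [FiniteDimensional ℝ V]
    (B : LinearMap.BilinForm ℝ V) (hsym : B.IsSymm) (hhodge : HodgeIndexCond B)
    (H C C' : V)
    (hH : 0 < B H H)
    (hC : 0 ≤ B C C) (hC' : 0 ≤ B C' C')
    (hCH : 0 ≤ B C H) (hC'H : 0 ≤ B C' H) :
    B C C' * B H H ≤ 2 * (B C H) * (B C' H) := by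
  have key := hodge_key B hsym hhodge H hH
  have hsymCC' : B C' C = B C C' := hsym.eq C' C
  rcases lt_or_eq_of_le (mul_nonneg hCH hC'H) with hdd | hdd
  · -- B C H * B C' H > 0
    have hv := key (B C' H • C + B C H • C')
    have hexp1 : B (B C' H • C + B C H • C') (B C' H • C + B C H • C') =
        B C' H * B C' H * B C C + 2 * (B C H * B C' H) * B C C'
          + B C H * B C H * B C' C' := by
      simp [map_add, map_smul, LinearMap.add_apply, LinearMap.smul_apply, smul_eq_mul, hsymCC']
      ring
    have hexp2 : B (B C' H • C + B C H • C') H = 2 * (B C H * B C' H) := by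
      simp [map_add, map_smul, LinearMap.add_apply, LinearMap.smul_apply, smul_eq_mul]
      ring
    rw [hexp1, hexp2] at hv
    nlinarith [mul_nonneg (mul_nonneg hC'H hC'H) hC, mul_nonneg (mul_nonneg hCH hCH) hC',
      mul_pos hdd hH]
  · -- B C H * B C' H = 0
    have h0 : B C H = 0 ∨ B C' H = 0 := mul_eq_zero.mp hdd.symm
    have main : ∀ D D' : V, 0 ≤ B D D → 0 ≤ B D' D' → B D H = 0 → B D D' ≤ 0 := by
      intro D D' hD hD' hDH
      have hDD : B D D = 0 := by
        have := key D
        rw [hDH] at this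
        nlinarith
      by_contra hpos
      push_neg at hpos
      set t : ℝ := (B D' H * B D' H - B D' D' * B H H + 1) / (2 * B D D' * B H H) with hT
      have hden : 2 * B D D' * B H H ≠ 0 := by positivity
      have hv := key (D' + t • D)
      have hsymD : B D D' = B D' D := hsym.eq D D'
      have hexp1 : B (D' + t • D) (D' + t • D) = B D' D' + 2 * t * B D D' := by
        simp [map_add, map_smul, LinearMap.add_apply, LinearMap.smul_apply, smul_eq_mul,
          hDD, hsymD]
        ring
      have hexp2 : B (D' + t • D) H = B D' H := by
        simp [map_add, map_smul, LinearMap.add_apply, LinearMap.smul_apply, smul_eq_mul, hDH]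
      rw [hexp1, hexp2] at hv
      have ht : 2 * t * B D D' * B H H = B D' H * B D' H - B D' D' * B H H + 1 := by
        rw [hT]; field_simp
      nlinarith [hv, ht]
    rcases h0 with h | h
    · have := main C C' hC hC' h
      rw [h]
      nlinarith [mul_nonpos_of_nonpos_of_nonneg this hH.le]
    · have := main C' C hC' hC h
      rw [h]
      rw [← hsymCC'] at *
      nlinarith [mul_nonpos_of_nonpos_of_nonneg this hH.le]
end

section
/- Let d ≥ 1 be a natural number, let c₀ be a natural number which is a perfect square, and let p₀ be the smallest prime number that does not divide 2d. Then there exists a natural number j with 1 ≤ j ≤ (p₀ + 1)/2 such that c₀ + j·d is not a perfect square. -/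
theorem stmt_8 (d : ℕ) (hd : 1 ≤ d) (c₀ : ℕ) (hc₀ : IsSquare c₀)
    (p₀ : ℕ) (hp₀ : p₀.Prime) (hp₀d : ¬ p₀ ∣ 2 * d)
    (hmin : ∀ q : ℕ, q.Prime → ¬ q ∣ 2 * d → p₀ ≤ q) :
    ∃ j : ℕ, 1 ≤ j ∧ j ≤ (p₀ + 1) / 2 ∧ ¬ IsSquare (c₀ + j * d) := by
  by_contra h
  push_neg at h
  -- p₀ is odd and does not divide d
  have hp2 : p₀ ≠ 2 := by
    rintro rfl
    exact hp₀d ⟨d, rfl⟩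
  have hpd : ¬ p₀ ∣ d := fun hdvd => hp₀d (hdvd.mul_left 2)
  have hp3 : 3 ≤ p₀ := by
    rcases hp₀.two_le.lt_or_eq with h' | h'
    · omega
    · exact absurd h'.symm hp2
  have hodd : p₀ % 2 = 1 := Nat.odd_iff.mp (hp₀.odd_of_ne_two hp2)
  haveI : Fact p₀.Prime := ⟨hp₀⟩
  set m : ℕ := (p₀ + 1) / 2 + 1 with hm
  have hm_le : m ≤ p₀ := by omega
  -- all residues c₀ + j*d, j < m, are squares in ℕ hence in ZMod p₀
  have hsq : ∀ j < m, IsSquare ((c₀ + j * d : ℕ) : ZMod p₀) := by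
    intro j hj
    have : IsSquare (c₀ + j * d) := by
      rcases Nat.eq_zero_or_pos j with rfl | hj1
      · simpa using hc₀
      · exact h j hj1 (by omega)
    rcases this with ⟨r, hr⟩
    exact ⟨(r : ZMod p₀), by rw [hr]; push_cast; ring⟩
  -- the set of squares in ZMod p₀ has at most (p₀+1)/2 elements
  set S : Finset (ZMod p₀) :=
    (Finset.range ((p₀ + 1) / 2)).image (fun k : ℕ => ((k : ZMod p₀)) ^ 2) with hS
  have hScard : S.card ≤ (p₀ + 1) / 2 :=
    le_trans (Finset.card_image_le) (by simp)
  have hmemS : ∀ x : ZMod p₀, IsSquare x → x ∈ S := by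
    intro x hx
    rcases hx with ⟨y, rfl⟩
    set k := (y.val) with hk
    have hklt : k < p₀ := ZMod.val_lt y
    have hky : (k : ZMod p₀) = y := ZMod.natCast_val y |>.trans (ZMod.cast_id _ _)
    by_cases hcase : k < (p₀ + 1) / 2
    · exact Finset.mem_image.mpr ⟨k, Finset.mem_range.mpr hcase, by rw [hky]; ring⟩
    · refine Finset.mem_image.mpr ⟨p₀ - k, Finset.mem_range.mpr (by omega), ?_⟩
      have hpk : ((p₀ - k : ℕ) : ZMod p₀) = -y := by
        have : ((p₀ - k : ℕ) : ZMod p₀) = (p₀ : ZMod p₀) - (k : ZMod p₀) := by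
          push_cast [Nat.cast_sub (le_of_lt hklt)]
          ring
        rw [this, ZMod.natCast_self, hky]; ring
      rw [hpk]; ring
  -- map j ↦ c₀ + j*d is injective on range m into S
  have hinj : Set.InjOn (fun j : ℕ => ((c₀ + j * d : ℕ) : ZMod p₀)) (Finset.range m) := by
    intro i hi j hj hij
    simp only [Finset.coe_range, Set.mem_Iio] at hi hj
    have : ((i : ZMod p₀)) * d = (j : ZMod p₀) * d := by
      push_cast at hij
      linear_combination hij
    have hdne : (d : ZMod p₀) ≠ 0 := by
      simpa [ZMod.natCast_eq_zero_iff] using hpd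
    have hij' : (i : ZMod p₀) = (j : ZMod p₀) := mul_right_cancel₀ hdne this
    have := (ZMod.natCast_eq_natCast_iff' i j p₀).mp hij'
    rwa [Nat.mod_eq_of_lt (lt_of_lt_of_le hi hm_le),
      Nat.mod_eq_of_lt (lt_of_lt_of_le hj hm_le)] at this
  have hcard : m ≤ S.card := by
    have := Finset.card_le_card_of_injOn (fun j : ℕ => ((c₀ + j * d : ℕ) : ZMod p₀))
      (fun j hj => hmemS _ (hsq j (Finset.mem_range.mp hj))) hinj
    simpa using this
  omega
end
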